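/- Let S be a finite nonempty subset of ℝ² and let ℓ be a line (one-dimensional affine subspace) of ℝ² × ℝ. If ℓ contains a point (x₀,r₀) with r₀ > f_S(x₀) (i.e. ℓ meets the open region strictly above the upper envelope), then ℓ intersects the upper envelope UE(S) = {(x, f_S(x)) : x ∈ ℝ²} in at most two points. -/
import Mathlib

noncomputable section

/-- The Euclidean plane. -/
abbrev Plane := EuclideanSpace ℝ (Fin 2)

/-- A line of the space of circles `ℝ² × ℝ` that meets the open region strictly above
the upper envelope `UE(S)` (the graph of `f_S(x) = max_{p ∈ S} dist x p`) intersects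
`UE(S)` in at most two points. -/
theorem line_inter_upper_envelope_at_most_two
    (S : Finset Plane) (hS : S.Nonempty)
    (p v : Plane × ℝ) (hv : v ≠ 0)
    (L : Set (Plane × ℝ)) (hL : L = {q : Plane × ℝ | ∃ t : ℝ, q = p + t • v})
    (x₀ : Plane) (r₀ : ℝ) (h₀ : (x₀, r₀) ∈ L)
    (habove : S.sup' hS (fun q => dist x₀ q) < r₀) :
    ∃ u w : Plane × ℝ,
      L ∩ {xr : Plane × ℝ | xr.2 = S.sup' hS (fun q => dist xr.1 q)} ⊆ {u, w} := by
  classical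
  set f : Plane → ℝ := fun x => S.sup' hS (fun q => dist x q) with hf
  set g : ℝ → ℝ := fun t => f (p.1 + t • v.1) - (p.2 + t * v.2) with hg
  -- convexity of g
  have hgconv : ConvexOn ℝ Set.univ g := by
    refine ⟨convex_univ, ?_⟩
    intro x _ y _ a b ha hb hab
    simp only [hg, smul_eq_mul]
    have h1 : p.1 + (a * x + b * y) • v.1 =
        a • (p.1 + x • v.1) + b • (p.1 + y • v.1) := by
      have hp : a • p.1 + b • p.1 = p.1 := by rw [← add_smul, hab, one_smul]
      rw [smul_add, smul_add, smul_smul, smul_smul]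
      rw [add_smul]
      rw [add_add_add_comm, hp]
    have key : f (p.1 + (a * x + b * y) • v.1) ≤
        a * f (p.1 + x • v.1) + b * f (p.1 + y • v.1) := by
      apply Finset.sup'_le
      intro q hq
      have h2 := (convexOn_dist q (convex_univ (E := Plane))).2
        (Set.mem_univ (p.1 + x • v.1)) (Set.mem_univ (p.1 + y • v.1)) ha hb hab
      rw [← h1] at h2
      refine le_trans h2 ?_
      have hx : dist (p.1 + x • v.1) q ≤ f (p.1 + x • v.1) :=
        Finset.le_sup' _ hq
      have hy : dist (p.1 + y • v.1) q ≤ f (p.1 + y • v.1) :=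
        Finset.le_sup' _ hq
      simp only [smul_eq_mul]
      nlinarith [mul_le_mul_of_nonneg_left hx ha, mul_le_mul_of_nonneg_left hy hb]
    have : a * (f (p.1 + x • v.1) - (p.2 + x * v.2)) + b * (f (p.1 + y • v.1) - (p.2 + y * v.2))
        = (a * f (p.1 + x • v.1) + b * f (p.1 + y • v.1)) - (p.2 + (a * x + b * y) * v.2) := by
      have : a * p.2 + b * p.2 = p.2 := by rw [← add_mul, hab, one_mul]
      ring_nf
      nlinarith [this]
    linarith [key, this.ge, this.le]
  -- the point strictly above
  rw [hL] at h₀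
  obtain ⟨t₀, ht₀⟩ := h₀
  have hx₀ : x₀ = p.1 + t₀ • v.1 := congrArg Prod.fst ht₀
  have hr₀ : r₀ = p.2 + t₀ * v.2 := congrArg Prod.snd ht₀
  have hgt₀ : g t₀ < 0 := by
    simp only [hg]
    rw [← hx₀]
    have : f x₀ < r₀ := habove
    linarith [hr₀ ▸ this]
  -- no three zeros
  have key : ∀ a b c : ℝ, a < b → b < c → g a = 0 → g b = 0 → g c = 0 → False := by
    intro a b c hab hbc hga hgb hgc
    rcases lt_or_ge t₀ b with h | h
    · have hs := hgconv.slope_mono_adjacent (Set.mem_univ t₀) (Set.mem_univ c) h hbc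
      rw [hgb, hgc] at hs
      have hbt : (0:ℝ) < b - t₀ := by linarith
      rw [div_le_iff₀ hbt] at hs
      have : (0 - 0) / (c - b) = 0 := by simp
      rw [this] at hs
      nlinarith
    · rcases eq_or_lt_of_le h with h' | h'
      · rw [← h'] at hgt₀; linarith
      · have hs := hgconv.slope_mono_adjacent (Set.mem_univ a) (Set.mem_univ t₀) hab h'
        rw [hga, hgb] at hs
        have hbt : (0:ℝ) < t₀ - b := by linarith
        have h0 : (0 - 0) / (b - a) = 0 := by simp
        rw [h0, le_div_iff₀ hbt] at hs
        nlinarith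
  have no3 : ∀ t₁ t₂ t₃ : ℝ, t₁ ≠ t₂ → t₁ ≠ t₃ → t₂ ≠ t₃ →
      g t₁ = 0 → g t₂ = 0 → g t₃ = 0 → False := by
    intro t₁ t₂ t₃ h12 h13 h23 h1 h2 h3
    rcases lt_trichotomy t₁ t₂ with a12 | a12 | a12
    · rcases lt_trichotomy t₂ t₃ with a23 | a23 | a23
      · exact key _ _ _ a12 a23 h1 h2 h3
      · exact h23 a23
      · rcases lt_trichotomy t₁ t₃ with a13 | a13 | a13
        · exact key _ _ _ a13 a23 h1 h3 h2
        · exact h13 a13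
        · exact key _ _ _ a13 a12 h3 h1 h2
    · exact h12 a12
    · rcases lt_trichotomy t₂ t₃ with a23 | a23 | a23
      · rcases lt_trichotomy t₁ t₃ with a13 | a13 | a13
        · exact key _ _ _ a12 a13 h2 h1 h3
        · exact h13 a13
        · exact key _ _ _ a23 a13 h2 h3 h1
      · exact h23 a23
      · exact key _ _ _ a23 a12 h3 h2 h1
  -- intersection points give zeros of g
  set I := L ∩ {xr : Plane × ℝ | xr.2 = S.sup' hS (fun q => dist xr.1 q)} with hI
  have hparam : ∀ q ∈ I, ∃ t : ℝ, q = p + t • v ∧ g t = 0 := by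
    intro q hq
    obtain ⟨hqL, hqE⟩ := hq
    rw [hL] at hqL
    obtain ⟨t, ht⟩ := hqL
    refine ⟨t, ht, ?_⟩
    have h1 : q.1 = p.1 + t • v.1 := congrArg Prod.fst ht
    have h2 : q.2 = p.2 + t * v.2 := congrArg Prod.snd ht
    have : q.2 = f q.1 := hqE
    simp only [hg]
    rw [← h1, ← this, h2]
    ring
  have hinj : ∀ t₁ t₂ : ℝ, p + t₁ • v = p + t₂ • v → t₁ = t₂ := by
    intro t₁ t₂ h
    have : t₁ • v = t₂ • v := by
      have := add_left_cancel h
      exact this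
    have h' : (t₁ - t₂) • v = 0 := by rw [sub_smul, this, sub_self]
    rcases smul_eq_zero.mp h' with h'' | h''
    · linarith [sub_eq_zero.mp h'']
    · exact absurd h'' hv
  rcases Set.eq_empty_or_nonempty I with hE | ⟨u, hu⟩
  · refine ⟨p, p, ?_⟩
    intro q hq
    have hqI : q ∈ I := hq
    rw [hE] at hqI
    exact absurd hqI (Set.notMem_empty q)
  by_cases hW : ∃ w ∈ I, w ≠ u
  · obtain ⟨w, hw, hwu⟩ := hW
    refine ⟨u, w, ?_⟩
    intro q hq
    have hq : q ∈ I := hq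
    by_contra hq'
    simp only [Set.mem_insert_iff, Set.mem_singleton_iff, not_or] at hq'
    obtain ⟨tq, htq, hgq⟩ := hparam q hq
    obtain ⟨tu, htu, hgu⟩ := hparam u hu
    obtain ⟨tw, htw, hgw⟩ := hparam w hw
    apply no3 tq tu tw ?_ ?_ ?_ hgq hgu hgw
    · intro h; exact hq'.1 (by rw [htq, htu, h])
    · intro h; exact hq'.2 (by rw [htq, htw, h])
    · intro h; exact hwu (by rw [htu, htw, h])
  · push_neg at hW
    refine ⟨u, u, ?_⟩
    intro q hq
    have hq : q ∈ I := hq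
    have := hW q hq
    simp [this]
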